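/- arXiv:2601.10682 — 2 statements merged into one kernel-verified Lean document; each statement's English description precedes it below -/
import Mathlib

section
/- The automorphism group of T = T_0^{⊗m} (where T_0 = [[1,0],[1,1]]) consists exactly of the permutation matrices induced by coordinate permutations of {0,1}^m: Aut(T) = {P_σ : σ ∈ S_m}, where P_σ e_{(x_1,…,x_m)} = e_{(x_{σ(1)},…,x_{σ(m)})}. Consequently Aut(T) is isomorphic to the symmetric group S_m and |Aut(T)| = m!. -/
open Matrix
open scoped Classical

/-- Arikan's kernel `T₀ = [[1,0],[1,1]]` over `F₂`. -/
def T0 : Matrix Bool Bool (ZMod 2) := fun x y =>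
  match x, y with
  | false, false => 1
  | false, true  => 0
  | true,  _     => 1

/-- The `m`-fold Kronecker power of `T0`, indexed by `{0,1}^m`. -/
def polarT : (m : ℕ) → Matrix (Fin m → Bool) (Fin m → Bool) (ZMod 2)
  | 0 => fun _ _ => 1
  | m + 1 => fun x y =>
      T0 (x 0) (y 0) * polarT m (fun i => x i.succ) (fun i => y i.succ)

/-- `P` is a permutation matrix. -/
def IsPermMatrix {X : Type*} [DecidableEq X] [Fintype X]
    (P : Matrix X X (ZMod 2)) : Prop :=
  ∃ π : Equiv.Perm X, ∀ u x, P u x = if u = π x then 1 else 0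

/-- The permutation matrix of the coordinate permutation of `{0,1}^m`
induced by `σ ∈ S_m`: its `x`-th column is `e_{(x_{σ 1},…,x_{σ m})}`. -/
def Pmat (m : ℕ) (σ : Equiv.Perm (Fin m)) :
    Matrix (Fin m → Bool) (Fin m → Bool) (ZMod 2) :=
  fun u x => if u = (fun j => x (σ j)) then 1 else 0

def PLe {m : ℕ} (y x : Fin m → Bool) : Prop := ∀ i, y i = true → x i = true

lemma polarT_eq (m : ℕ) (x y : Fin m → Bool) :
    polarT m x y = if PLe y x then 1 else 0 := by
  induction m with
  | zero =>
    have h : PLe y x := fun i => i.elim0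
    simp [polarT, h]
  | succ n ih =>
    have hT0 : ∀ a b : Bool, T0 a b = if (b = true → a = true) then 1 else 0 := by
      intro a b; cases a <;> cases b <;> simp [T0]
    show T0 (x 0) (y 0) * polarT n _ _ = _
    have hsplit : PLe y x ↔ ((y 0 = true → x 0 = true) ∧
        PLe (fun i => y i.succ) (fun i => x i.succ)) :=
      ⟨fun h => ⟨h 0, fun i hi => h i.succ hi⟩,
       fun h i => Fin.cases h.1 (fun j => h.2 j) i⟩
    rw [ih, hT0, hsplit]
    by_cases h0 : (y 0 = true → x 0 = true) <;>
      by_cases hs : PLe (fun i => y i.succ) fun i => x i.succ <;>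
      simp [h0, hs]

lemma ite_one_zero_inj {p q : Prop} [Decidable p] [Decidable q]
    (h : (if p then (1 : ZMod 2) else 0) = if q then 1 else 0) : p ↔ q := by
  constructor <;> intro hp
  · by_contra hq; rw [if_pos hp, if_neg hq] at h; exact one_ne_zero h
  · by_contra hq; rw [if_neg hq, if_pos hp] at h; exact one_ne_zero h.symm

def atomF {m : ℕ} (i : Fin m) : Fin m → Bool := fun j => decide (j = i)

lemma PLe_atomF {m : ℕ} (i : Fin m) (x : Fin m → Bool) :
    PLe (atomF i) x ↔ x i = true := by
  constructor
  · intro h; exact h i (by simp [atomF])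
  · intro h j hj
    have : j = i := by simpa [atomF] using hj
    rwa [this]

lemma atomF_injective {m : ℕ} : Function.Injective (atomF (m := m)) := by
  intro i j h
  have := congrFun h i
  simpa [atomF] using this

def MyAtom {m : ℕ} (a : Fin m → Bool) : Prop :=
  a ≠ (fun _ => false) ∧ ∀ b, PLe b a → b = a ∨ b = (fun _ => false)

lemma myAtom_atomF {m : ℕ} (i : Fin m) : MyAtom (atomF i) := by
  constructor
  · intro h
    have := congrFun h i
    simp [atomF] at this
  · intro b hb
    have hb' : ∀ j, b j = true → j = i := by
      intro j hj
      simpa [atomF] using hb j hj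
    by_cases hbi : b i = true
    · left
      funext j
      by_cases hji : j = i
      · subst hji; simp [atomF, hbi]
      · have hbj : b j = false := by
          rcases Bool.eq_false_or_eq_true (b j) with h | h
          · exact absurd (hb' j h) hji
          · exact h
        simp [atomF, hji, hbj]
    · right
      funext j
      by_cases hbj : b j = true
      · exact absurd (hb' j hbj ▸ hbj) hbi
      · simpa using hbj

lemma myAtom_exists {m : ℕ} (a : Fin m → Bool) (ha : MyAtom a) :
    ∃ i, a = atomF i := by
  obtain ⟨hne, hmin⟩ := ha
  have : ∃ i, a i = true := by
    by_contra hc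
    push_neg at hc
    exact hne (funext fun i => by simpa using hc i)
  obtain ⟨i, hi⟩ := this
  have : atomF i = a ∨ atomF i = (fun _ => false) :=
    hmin _ ((PLe_atomF i a).mpr hi)
  rcases this with h | h
  · exact ⟨i, h.symm⟩
  · exfalso
    have := congrFun h i
    simp [atomF] at this

lemma conj_apply {X : Type*} [DecidableEq X] [Fintype X]
    (T P : Matrix X X (ZMod 2)) (π : Equiv.Perm X)
    (hP : ∀ u x, P u x = if u = π x then 1 else 0) (x y : X) :
    (Pᵀ * T * P) x y = T (π x) (π y) := by
  have h1 : ∀ v, (Pᵀ * T) x v = T (π x) v := by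
    intro v
    rw [Matrix.mul_apply]
    have h : ∀ u, Pᵀ x u * T u v = if u = π x then T u v else 0 := by
      intro u
      rw [Matrix.transpose_apply, hP]
      split_ifs <;> simp
    simp_rw [h]
    simp
  rw [Matrix.mul_apply]
  have h : ∀ v, (Pᵀ * T) x v * P v y = if v = π y then T (π x) v else 0 := by
    intro v
    rw [h1, hP]
    split_ifs <;> simp
  simp_rw [h]
  simp

lemma backward (m : ℕ) (σ : Equiv.Perm (Fin m)) :
    IsPermMatrix (Pmat m σ) ∧ (Pmat m σ)ᵀ * polarT m * Pmat m σ = polarT m := by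
  set π : Equiv.Perm (Fin m → Bool) :=
    { toFun := fun x => fun j => x (σ j)
      invFun := fun x => fun j => x (σ.symm j)
      left_inv := fun x => funext fun j => by simp
      right_inv := fun x => funext fun j => by simp } with hπdef
  have hP : ∀ u x, Pmat m σ u x = if u = π x then 1 else 0 := fun u x => rfl
  refine ⟨⟨π, hP⟩, ?_⟩
  ext x y
  rw [conj_apply (polarT m) (Pmat m σ) π hP, polarT_eq, polarT_eq]
  have hiff : PLe (π y) (π x) ↔ PLe y x := by
    constructor
    · intro h i hi
      have h2 := h (σ.symm i)
      have e1 : π y (σ.symm i) = y i := by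
        show y (σ (σ.symm i)) = y i; rw [σ.apply_symm_apply]
      have e2 : π x (σ.symm i) = x i := by
        show x (σ (σ.symm i)) = x i; rw [σ.apply_symm_apply]
      rw [e1, e2] at h2; exact h2 hi
    · intro h i hi; exact h (σ i) hi
  simp [hiff]

lemma forward (m : ℕ) (P : Matrix (Fin m → Bool) (Fin m → Bool) (ZMod 2))
    (hperm : IsPermMatrix P) (hT : Pᵀ * polarT m * P = polarT m) :
    ∃ σ : Equiv.Perm (Fin m), P = Pmat m σ := by
  obtain ⟨π, hπ⟩ := hperm
  have key : ∀ x y : Fin m → Bool, PLe (π y) (π x) ↔ PLe y x := by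
    intro x y
    have h := congrFun (congrFun hT x) y
    rw [conj_apply (polarT m) P π hπ, polarT_eq, polarT_eq] at h
    exact ite_one_zero_inj h
  -- π maps bottom to bottom
  have hbot : π (fun _ => false) = (fun _ => false) := by
    funext i
    have h1 : PLe (fun _ => false) (π.symm (fun _ => false)) := by
      intro j hj; simp at hj
    have h2 : PLe (π (fun _ => false)) (fun _ => false) := by
      have := (key (π.symm (fun _ => false)) (fun _ => false)).mpr h1
      rwa [π.apply_symm_apply] at this
    rcases Bool.eq_false_or_eq_true (π (fun _ => false) i) with h | h
    · have := h2 i h; simp at this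
    · exact h
  -- π maps atoms to atoms
  have hatom : ∀ a, MyAtom a → MyAtom (π a) := by
    intro a ⟨hne, hmin⟩
    constructor
    · intro h
      exact hne (π.injective (h.trans hbot.symm))
    · intro b hb
      have hb' : PLe (π.symm b) a := by
        have := (key a (π.symm b)).mp (by rwa [π.apply_symm_apply])
        exact this
      rcases hmin _ hb' with h | h
      · left; rw [← π.apply_symm_apply b, h]
      · right; rw [← π.apply_symm_apply b, h, hbot]
  -- extract the coordinate map
  have hex : ∀ i : Fin m, ∃ j, π (atomF i) = atomF j := fun i =>
    myAtom_exists _ (hatom _ (myAtom_atomF i))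
  choose f hf using hex
  have hfinj : Function.Injective f := by
    intro i j h
    exact atomF_injective (π.injective (by rw [hf i, hf j, h]))
  have hfbij : Function.Bijective f := (Finite.injective_iff_bijective).mp hfinj
  let σf := Equiv.ofBijective f hfbij
  -- the key valuation identity
  have hval : ∀ (x : Fin m → Bool) (i : Fin m), (π x) (f i) = x i := by
    intro x i
    have h1 : PLe (atomF (f i)) (π x) ↔ PLe (atomF i) x := by
      rw [← hf i]; exact key x (atomF i)
    rw [PLe_atomF, PLe_atomF] at h1
    rcases Bool.eq_false_or_eq_true (x i) with h | h
    · rw [h, h1.mpr h]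
    · rcases Bool.eq_false_or_eq_true ((π x) (f i)) with h' | h'
      · rw [h1.mp h'] at h; simp at h
      · rw [h, h']
  have hπx : ∀ x : Fin m → Bool, π x = fun j => x (σf.symm j) := by
    intro x
    funext j
    have e : f (σf.symm j) = j := σf.apply_symm_apply j
    calc (π x) j = (π x) (f (σf.symm j)) := by rw [e]
    _ = x (σf.symm j) := hval x (σf.symm j)
  refine ⟨σf.symm, ?_⟩
  funext u x
  rw [hπ u x, hπx x]
  rfl

lemma Pmat_injective (m : ℕ) : Function.Injective (Pmat m) := by
  intro σ τ h
  ext i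
  have hx : ∀ x : Fin m → Bool, (fun j => x (σ j)) = (fun j => x (τ j)) := by
    intro x
    have h1 : (if (fun j => x (σ j)) = (fun j => x (σ j)) then (1 : ZMod 2) else 0)
        = if (fun j => x (σ j)) = (fun j => x (τ j)) then 1 else 0 :=
      congrFun (congrFun h (fun j => x (σ j))) x
    exact (ite_one_zero_inj h1).mp rfl
  have := congrFun (hx (atomF (σ i))) i
  have h2 : atomF (σ i) (τ i) = true := by
    rw [← this]; simp [atomF]
  have : τ i = σ i := by simpa [atomF] using h2
  rw [this]

/-- `Aut(T0^{⊗m})` consists exactly of the permutation matrices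
induced by coordinate permutations of `{0,1}^m`; in particular it has
cardinality `m!`. -/
theorem stmt_4 (m : ℕ) :
    ({P : Matrix (Fin m → Bool) (Fin m → Bool) (ZMod 2) |
        IsPermMatrix P ∧ Pᵀ * polarT m * P = polarT m}
      = {P | ∃ σ : Equiv.Perm (Fin m), P = Pmat m σ}) ∧
    Nat.card {P : Matrix (Fin m → Bool) (Fin m → Bool) (ZMod 2) //
        IsPermMatrix P ∧ Pᵀ * polarT m * P = polarT m} = Nat.factorial m := by
  constructor
  · ext P
    constructor
    · rintro ⟨hperm, hT⟩
      exact forward m P hperm hT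
    · rintro ⟨σ, rfl⟩
      exact backward m σ
  · have e : Equiv.Perm (Fin m) ≃
        {P : Matrix (Fin m → Bool) (Fin m → Bool) (ZMod 2) //
          IsPermMatrix P ∧ Pᵀ * polarT m * P = polarT m} := by
      refine Equiv.ofBijective (fun σ => ⟨Pmat m σ, backward m σ⟩) ⟨?_, ?_⟩
      · intro σ τ h
        exact Pmat_injective m (congrArg Subtype.val h)
      · rintro ⟨P, hperm, hT⟩
        obtain ⟨σ, rfl⟩ := forward m P hperm hT
        exact ⟨σ, rfl⟩
    rw [Nat.card_congr e.symm, Nat.card_eq_fintype_card, Fintype.card_perm, Fintype.card_fin]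
end

section
/- Fix M ≥ 1, δ ∈ (0,1), and p ∈ (0,1). Let K ~ Binomial(M, p), and let u_k for k < M be the unique value with F(k;u_k) = δ (where F(k;q) = P(Binomial(M,q) ≤ k)), and u_M := 1. Then P(p ≤ u_K) ≥ 1 − δ. -/
/-- The binomial lower-tail function `F(k;q) = Σ_{j≤k} C(M,j) q^j (1−q)^{M−j}`. -/
noncomputable def Fbin (M k : ℕ) (q : ℝ) : ℝ :=
  ∑ j ∈ Finset.range (k + 1), (M.choose j : ℝ) * q ^ j * (1 - q) ^ (M - j)

lemma Fbin_hasDerivAt (M k : ℕ) (hk : k < M) (q : ℝ) :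
    HasDerivAt (Fbin M k)
      (-(((M - k : ℕ) : ℝ) * (M.choose k : ℝ) * q ^ k * (1 - q) ^ (M - k - 1))) q := by
  have key : ∀ j ∈ Finset.range (k + 1),
      HasDerivAt (fun q : ℝ => (M.choose j : ℝ) * q ^ j * (1 - q) ^ (M - j))
        ((M.choose j : ℝ) * ((j : ℝ) * q ^ (j - 1)) * (1 - q) ^ (M - j)
          + (M.choose j : ℝ) * q ^ j *
            (-(((M - j : ℕ) : ℝ) * (1 - q) ^ (M - j - 1)))) q := by
    intro j _
    have h1 : HasDerivAt (fun q : ℝ => (M.choose j : ℝ) * q ^ j)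
        ((M.choose j : ℝ) * ((j : ℝ) * q ^ (j - 1))) q :=
      (hasDerivAt_pow j q).const_mul _
    have hin : HasDerivAt (fun q : ℝ => 1 - q) (-1) q := by
      simpa using (hasDerivAt_id q).const_sub 1
    have h2 : HasDerivAt (fun q : ℝ => (1 - q) ^ (M - j))
        (-(((M - j : ℕ) : ℝ) * (1 - q) ^ (M - j - 1))) q := by
      have := (hasDerivAt_pow (M - j) (1 - q)).comp q hin
      simpa [Function.comp_def, mul_comm, mul_left_comm, mul_assoc] using this
    simpa [Pi.mul_def, mul_comm, mul_left_comm, mul_assoc] using h1.mul h2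
  have hsum := HasDerivAt.fun_sum key
  have heq : (∑ j ∈ Finset.range (k + 1),
      ((M.choose j : ℝ) * ((j : ℝ) * q ^ (j - 1)) * (1 - q) ^ (M - j)
        + (M.choose j : ℝ) * q ^ j *
          (-(((M - j : ℕ) : ℝ) * (1 - q) ^ (M - j - 1)))))
      = -(((M - k : ℕ) : ℝ) * (M.choose k : ℝ) * q ^ k * (1 - q) ^ (M - k - 1)) := by
    rw [Finset.sum_add_distrib]
    rw [Finset.sum_range_succ' (fun j => (M.choose j : ℝ) * ((j : ℝ) * q ^ (j - 1)) * (1 - q) ^ (M - j))]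
    rw [Finset.sum_range_succ (fun j => (M.choose j : ℝ) * q ^ j *
          (-(((M - j : ℕ) : ℝ) * (1 - q) ^ (M - j - 1))))]
    have hcancel : ∀ j ∈ Finset.range k,
        (M.choose (j + 1) : ℝ) * (((j + 1 : ℕ) : ℝ) * q ^ ((j + 1) - 1)) * (1 - q) ^ (M - (j + 1))
        = -((M.choose j : ℝ) * q ^ j * (-(((M - j : ℕ) : ℝ) * (1 - q) ^ (M - j - 1)))) := by
      intro j _
      have hc : (M.choose (j + 1) * (j + 1) : ℕ) = M.choose j * (M - j) :=
        Nat.choose_succ_right_eq M j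
      have hc' : ((M.choose (j + 1) : ℝ)) * ((j + 1 : ℕ) : ℝ)
          = (M.choose j : ℝ) * ((M - j : ℕ) : ℝ) := by
        exact_mod_cast congrArg (fun n : ℕ => (n : ℝ)) hc
      have hexp : M - (j + 1) = M - j - 1 := by omega
      rw [hexp]
      push_cast at hc' ⊢
      linear_combination (q ^ j * (1 - q) ^ (M - j - 1)) * hc'
    calc (∑ j ∈ Finset.range k,
            (M.choose (j + 1) : ℝ) * (((j + 1 : ℕ) : ℝ) * q ^ ((j + 1) - 1)) * (1 - q) ^ (M - (j + 1)))
          + (M.choose 0 : ℝ) * (((0:ℕ) : ℝ) * q ^ (0 - 1)) * (1 - q) ^ (M - 0)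
          + ((∑ j ∈ Finset.range k, (M.choose j : ℝ) * q ^ j *
              (-(((M - j : ℕ) : ℝ) * (1 - q) ^ (M - j - 1))))
            + (M.choose k : ℝ) * q ^ k * (-(((M - k : ℕ) : ℝ) * (1 - q) ^ (M - k - 1))))
        = (∑ j ∈ Finset.range k,
            (-((M.choose j : ℝ) * q ^ j * (-(((M - j : ℕ) : ℝ) * (1 - q) ^ (M - j - 1)))))
          + 0
          + ((∑ j ∈ Finset.range k, (M.choose j : ℝ) * q ^ j *
              (-(((M - j : ℕ) : ℝ) * (1 - q) ^ (M - j - 1))))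
            + (M.choose k : ℝ) * q ^ k * (-(((M - k : ℕ) : ℝ) * (1 - q) ^ (M - k - 1))))) := by
          rw [Finset.sum_congr rfl hcancel]; norm_num
      _ = -(((M - k : ℕ) : ℝ) * (M.choose k : ℝ) * q ^ k * (1 - q) ^ (M - k - 1)) := by
          have hz : (∑ j ∈ Finset.range k,
              (-((M.choose j : ℝ) * q ^ j * (-(((M - j : ℕ) : ℝ) * (1 - q) ^ (M - j - 1))))))
              = -(∑ j ∈ Finset.range k, (M.choose j : ℝ) * q ^ j *
                  (-(((M - j : ℕ) : ℝ) * (1 - q) ^ (M - j - 1)))) := by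
            simp
          rw [hz]
          ring
  rw [heq] at hsum
  exact hsum

lemma Fbin_antitoneOn (M k : ℕ) (hk : k < M) :
    AntitoneOn (Fbin M k) (Set.Icc (0 : ℝ) 1) := by
  have hdiff : ∀ q : ℝ, HasDerivAt (Fbin M k)
      (-(((M - k : ℕ) : ℝ) * (M.choose k : ℝ) * q ^ k * (1 - q) ^ (M - k - 1))) q :=
    fun q => Fbin_hasDerivAt M k hk q
  apply antitoneOn_of_deriv_nonpos (convex_Icc 0 1)
  · exact fun q _ => ((hdiff q).differentiableAt).continuousAt.continuousWithinAt
  · exact fun q _ => ((hdiff q).differentiableAt).differentiableWithinAt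
  · intro q hq
    rw [interior_Icc] at hq
    rw [(hdiff q).deriv]
    have h1 : (0:ℝ) ≤ q ^ k := pow_nonneg hq.1.le k
    have h2 : (0:ℝ) ≤ (1 - q) ^ (M - k - 1) := pow_nonneg (by linarith [hq.2]) _
    have h3 : (0:ℝ) ≤ ((M - k : ℕ) : ℝ) := Nat.cast_nonneg _
    have h4 : (0:ℝ) ≤ (M.choose k : ℝ) := Nat.cast_nonneg _
    have := mul_nonneg (mul_nonneg (mul_nonneg h3 h4) h1) h2
    linarith

/-- with `K ~ Binomial(M,p)` and `u_k` the unique value with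
`F(k;u_k) = δ` for `k < M` (and `u_M := 1`), we have `P(p ≤ u_K) ≥ 1 − δ`. -/
theorem stmt_16 (M : ℕ) (hM : 1 ≤ M) (δ p : ℝ)
    (hδ : δ ∈ Set.Ioo (0 : ℝ) 1) (hp : p ∈ Set.Ioo (0 : ℝ) 1)
    (u : ℕ → ℝ)
    (hu : ∀ k < M, u k ∈ Set.Ioo (0 : ℝ) 1 ∧ Fbin M k (u k) = δ)
    (huM : u M = 1) :
    1 - δ ≤ ∑ k ∈ Finset.range (M + 1),
        if p ≤ u k then (M.choose k : ℝ) * p ^ k * (1 - p) ^ (M - k) else 0 := by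
  set f : ℕ → ℝ := fun k => (M.choose k : ℝ) * p ^ k * (1 - p) ^ (M - k) with hf
  have hfnonneg : ∀ k, 0 ≤ f k := by
    intro k
    exact mul_nonneg (mul_nonneg (Nat.cast_nonneg _) (pow_nonneg hp.1.le _))
      (pow_nonneg (by linarith [hp.2]) _)
  have hsum1 : ∑ k ∈ Finset.range (M + 1), f k = 1 := by
    have := add_pow p (1 - p) M
    simp only [add_sub_cancel, one_pow] at this
    rw [this.symm] at *
    · calc ∑ k ∈ Finset.range (M + 1), f k
          = ∑ k ∈ Finset.range (M + 1), p ^ k * (1 - p) ^ (M - k) * (M.choose k : ℝ) := by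
            apply Finset.sum_congr rfl; intro k _; simp [hf]; ring
        _ = (p + (1 - p)) ^ M := (add_pow p (1 - p) M).symm
        _ = 1 := by norm_num
  -- split the sum
  have hsplit : ∑ k ∈ Finset.range (M + 1), (if p ≤ u k then f k else 0)
      = 1 - ∑ k ∈ Finset.range (M + 1), (if u k < p then f k else 0) := by
    rw [← hsum1, ← Finset.sum_sub_distrib]
    apply Finset.sum_congr rfl
    intro k _
    by_cases h : p ≤ u k
    · rw [if_pos h, if_neg (not_lt.mpr h)]; ring
    · rw [if_neg h, if_pos (not_le.mp h)]; ring
  rw [hsplit]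
  have hbad : ∑ k ∈ Finset.range (M + 1), (if u k < p then f k else 0) ≤ δ := by
    rw [← Finset.sum_filter]
    set B := (Finset.range (M + 1)).filter (fun k => u k < p) with hB
    rcases B.eq_empty_or_nonempty with hE | hne
    · rw [hE]; simpa using hδ.1.le
    · set ks := B.max' hne with hks
      have hksB : ks ∈ B := B.max'_mem hne
      have hksM : ks < M := by
        rw [hB, Finset.mem_filter, Finset.mem_range] at hksB
        rcases hksB with ⟨h1, h2⟩
        rcases Nat.lt_succ_iff_lt_or_eq.mp h1 with h | h
        · exact h
        · exfalso; rw [h, huM] at h2; linarith [hp.2]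
      have hksu : u ks < p := (Finset.mem_filter.mp hksB).2
      obtain ⟨huks, hFks⟩ := hu ks hksM
      have hsub : B ⊆ Finset.range (ks + 1) := by
        intro k hk
        rw [Finset.mem_range, Nat.lt_succ_iff]
        exact B.le_max' k hk
      have h1 : ∑ k ∈ B, f k ≤ ∑ k ∈ Finset.range (ks + 1), f k :=
        Finset.sum_le_sum_of_subset_of_nonneg hsub (fun k _ _ => hfnonneg k)
      have h2 : ∑ k ∈ Finset.range (ks + 1), f k = Fbin M ks p := rfl
      have h3 : Fbin M ks p ≤ Fbin M ks (u ks) := by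
        apply Fbin_antitoneOn M ks hksM
        · exact ⟨huks.1.le, huks.2.le⟩
        · exact ⟨hp.1.le, hp.2.le⟩
        · exact hksu.le
      calc ∑ k ∈ B, f k ≤ Fbin M ks p := h2 ▸ h1
        _ ≤ Fbin M ks (u ks) := h3
        _ = δ := hFks
  linarith
end
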